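/- arXiv:2304.11353 — 2 statements merged into one kernel-verified Lean document; each statement's English description precedes it below -/
import Mathlib

section
/- Let N ≥ 1 and let f : Fin N → Fin N be a map (the dynamics of a Boolean or k-valued logical network in algebraic state space form). Let M be the transition matrix of f over ℕ, i.e. the N×N matrix with M i j = 1 if f j = i and M i j = 0 otherwise. For d ≥ 1 let N_d denote the number of cycles of f of length d, i.e. N_d = (card {x : Fin N | Function.minimalPeriod f x = d}) / d. Then for every s ≥ 1, the trace of M^s equals the sum over all divisors k of s of k · N_k; equivalently, N_1 = trace(M) and for s ≥ 2, s · N_s = trace(M^s) − Σ_{k a proper divisor of s} k · N_k. -/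
open Function

/-- Key divisibility: the set of points of minimal period `k` is a disjoint union of
cycles of length `k`, hence its cardinality is divisible by `k`. -/
lemma aux_dvd_card_minimalPeriod {N : ℕ} (f : Fin N → Fin N) (k : ℕ) (hk : 1 ≤ k) :
    k ∣ Fintype.card {x : Fin N // Function.minimalPeriod f x = k} := by
  classical
  set S := {x : Fin N // Function.minimalPeriod f x = k} with hS
  have hmem : ∀ x : S, (x : Fin N) ∈ Function.periodicPts f := fun x =>
    Function.minimalPeriod_pos_iff_mem_periodicPts.mp (by rw [x.2]; omega)
  have hfix : ∀ x : S, f^[k] (x : Fin N) = x := fun x => by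
    have := Function.isPeriodicPt_minimalPeriod f (x : Fin N)
    rwa [x.2] at this
  have hfS : ∀ x : S, Function.minimalPeriod f (f (x : Fin N)) = k := fun x => by
    rw [Function.minimalPeriod_apply (hmem x), x.2]
  let F : S → S := fun x => ⟨f x, hfS x⟩
  have hFinj : Function.Injective F := by
    intro x y hxy
    have hxy' : f (x : Fin N) = f (y : Fin N) := congrArg Subtype.val hxy
    have hksucc : k - 1 + 1 = k := Nat.succ_pred_eq_of_pos hk
    have hx1 : f^[k] (x : Fin N) = f^[k-1] (f (x : Fin N)) := by
      rw [← Function.iterate_succ_apply, Nat.succ_eq_add_one, hksucc]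
    have hy1 : f^[k] (y : Fin N) = f^[k-1] (f (y : Fin N)) := by
      rw [← Function.iterate_succ_apply, Nat.succ_eq_add_one, hksucc]
    apply Subtype.ext
    calc (x : Fin N) = f^[k] x := (hfix x).symm
      _ = f^[k-1] (f (x : Fin N)) := hx1
      _ = f^[k-1] (f (y : Fin N)) := by rw [hxy']
      _ = f^[k] (y : Fin N) := hy1.symm
      _ = y := hfix y
  let g : Equiv.Perm S := Equiv.ofBijective F (Finite.injective_iff_bijective.mp hFinj)
  have hgcoe : ∀ x : S, ((g x : S) : Fin N) = f (x : Fin N) := fun x => rfl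
  have hiter : ∀ (n : ℕ) (x : S), ((g^[n] x : S) : Fin N) = f^[n] (x : Fin N) := by
    intro n
    induction n with
    | zero => intro x; rfl
    | succ n ih =>
        intro x
        rw [Function.iterate_succ_apply, Function.iterate_succ_apply, ← hgcoe, ih]
  have hper : ∀ (n : ℕ) (x : S),
      Function.IsPeriodicPt (⇑g) n x ↔ Function.IsPeriodicPt f n (x : Fin N) := by
    intro n x
    unfold Function.IsPeriodicPt Function.IsFixedPt
    rw [← hiter n x]
    exact ⟨fun h => by rw [h], fun h => Subtype.ext h⟩
  have hmp : ∀ x : S, Function.minimalPeriod (⇑g) x = k := by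
    intro x
    have h1 : Function.minimalPeriod (⇑g) x ∣ k := by
      apply Function.IsPeriodicPt.minimalPeriod_dvd
      rw [hper]
      have := Function.isPeriodicPt_minimalPeriod f (x : Fin N)
      rwa [x.2] at this
    have h2 : k ∣ Function.minimalPeriod (⇑g) x := by
      rw [← x.2]
      apply Function.IsPeriodicPt.minimalPeriod_dvd
      rw [← hper]
      exact Function.isPeriodicPt_minimalPeriod (⇑g) x
    exact Nat.dvd_antisymm h1 h2
  -- class equation for the action of ⟨g⟩ on S
  have hcard := Fintype.card_congr
    (MulAction.selfEquivSigmaOrbits (Subgroup.zpowers g) S)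
  rw [Fintype.card_sigma] at hcard
  have horb : ∀ ω : MulAction.orbitRel.Quotient (Subgroup.zpowers g) S,
      Fintype.card (MulAction.orbit (Subgroup.zpowers g) ω.out) = k := by
    intro ω
    have := (MulAction.minimalPeriod_eq_card (a := g) (b := ω.out)).symm
    rw [this]
    have : (fun y : S => g • y) = ⇑g := rfl
    rw [this, hmp]
  rw [Finset.sum_congr rfl (fun ω _ => horb ω), Finset.sum_const, smul_eq_mul] at hcard
  exact ⟨Finset.univ.card, hcard.trans (Nat.mul_comm _ _)⟩

/-- Formula (1.3): for a logical network `f : Fin N → Fin N` with transition matrix `M`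
(`M i j = 1` iff `f j = i`), the trace of `M^s` equals `∑_{k ∣ s} k · N_k`, where
`N_k = (card {x | minimalPeriod f x = k}) / k` is the number of cycles of length `k`. -/
theorem trace_pow_eq_sum_divisors_mul_numCycles
    (N : ℕ) (hN : 1 ≤ N) (f : Fin N → Fin N)
    (M : Matrix (Fin N) (Fin N) ℕ)
    (hM : ∀ i j, M i j = if f j = i then 1 else 0) :
    ∀ s : ℕ, 1 ≤ s →
      Matrix.trace (M ^ s) =
        ∑ k ∈ s.divisors,
          k * (Fintype.card {x : Fin N // Function.minimalPeriod f x = k} / k) := by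
  classical
  have hpow : ∀ (s : ℕ) (i j : Fin N), (M ^ s) i j = if f^[s] j = i then 1 else 0 := by
    intro s
    induction s with
    | zero =>
        intro i j
        simp [Matrix.one_apply, eq_comm]
    | succ s ih =>
        intro i j
        rw [pow_succ', Matrix.mul_apply]
        simp only [hM, ih]
        rw [Finset.sum_eq_single (f^[s] j)]
        · simp [Function.iterate_succ_apply']
        · intro l _ hl
          simp [Ne.symm hl]
        · intro h; exact absurd (Finset.mem_univ _) h
  intro s hs
  -- trace = number of s-periodic points
  have htr : Matrix.trace (M ^ s) =
      (Finset.univ.filter (fun x : Fin N => f^[s] x = x)).card := by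
    rw [Matrix.trace]
    simp only [Matrix.diag, hpow]
    rw [Finset.card_filter]
  rw [htr]
  -- fiberwise counting over divisors of s
  have hfib : (Finset.univ.filter (fun x : Fin N => f^[s] x = x)).card =
      ∑ k ∈ s.divisors,
        (Finset.univ.filter (fun x : Fin N => Function.minimalPeriod f x = k)).card := by
    rw [Finset.card_eq_sum_card_fiberwise
      (f := fun x : Fin N => Function.minimalPeriod f x) (t := s.divisors)
      (fun x hx => by
        rw [Finset.mem_coe, Finset.mem_filter] at hx
        rw [Finset.mem_coe, Nat.mem_divisors]
        exact ⟨Function.IsPeriodicPt.minimalPeriod_dvd hx.2, by omega⟩)]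
    refine Finset.sum_congr rfl (fun k hk => ?_)
    congr 1
    rw [Finset.filter_filter]
    apply Finset.filter_congr
    intro x _
    simp only [and_iff_right_iff_imp]
    intro hmp
    have hdvd : k ∣ s := (Nat.mem_divisors.mp hk).1
    exact Function.isPeriodicPt_iff_minimalPeriod_dvd.mpr (hmp ▸ hdvd)
  rw [hfib]
  refine Finset.sum_congr rfl (fun k hk => ?_)
  have hdvd : k ∣ s := (Nat.mem_divisors.mp hk).1
  have hk1 : 1 ≤ k := by
    rcases Nat.eq_zero_or_pos k with h | h
    · subst h; exact absurd (Nat.eq_zero_of_zero_dvd hdvd) (by omega)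
    · exact h
  rw [Nat.mul_div_cancel' (aux_dvd_card_minimalPeriod f k hk1)]
  exact (Fintype.card_subtype _).symm
end

section
/- Let n, m, p ≥ 1, let f : Fin m → Fin n → Fin n be a deterministic transition map and h : Fin n → Fin p an output map. Let H be the p×n matrix over ℕ with H y x = 1 if h x = y and 0 otherwise, and for each control u let M_u be the n×n matrix over ℕ with (M_u) x' x = 1 if f u x = x' and 0 otherwise. Then the transition relation of the simulation is realized by the matrix product H · M_u · Hᵀ: for all u : Fin m and y y' : Fin p, (H * M_u * Hᵀ) y' y > 0 if and only if ∃ x : Fin n, h x = y ∧ h (f u x) = y'. -/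
/-- The transition relation of the simulation is realized by `H * M_u * Hᵀ`: the entry
`(H * M_u * Hᵀ) y' y` is positive iff some state `x` with output `y` is steered by
control `u` to a state with output `y'`. -/
theorem simulation_matrix_pos_iff
    (n m p : ℕ) (hn : 1 ≤ n) (hm : 1 ≤ m) (hp : 1 ≤ p)
    (f : Fin m → Fin n → Fin n) (h : Fin n → Fin p)
    (H : Matrix (Fin p) (Fin n) ℕ)
    (hH : ∀ y x, H y x = if h x = y then 1 else 0)
    (M : Fin m → Matrix (Fin n) (Fin n) ℕ)
    (hM : ∀ u x' x, M u x' x = if f u x = x' then 1 else 0) :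
    ∀ (u : Fin m) (y y' : Fin p),
      0 < (H * M u * H.transpose) y' y ↔ ∃ x : Fin n, h x = y ∧ h (f u x) = y' := by
  intro u y y'
  simp only [Matrix.mul_apply, Matrix.transpose_apply, hH, hM]
  constructor
  · intro hpos
    rw [pos_iff_ne_zero] at hpos
    by_contra hc
    push_neg at hc
    apply hpos
    apply Finset.sum_eq_zero
    intro x _
    by_cases h3 : h x = y
    · rw [if_pos h3, mul_one]
      apply Finset.sum_eq_zero
      intro a _
      by_cases h2 : f u x = a
      · rw [if_pos h2, mul_one, if_neg (h2 ▸ hc x h3)]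
      · simp [h2]
    · simp [h3]
  · rintro ⟨x, hx, hfx⟩
    have : (0:ℕ) < ∑ a, (if h a = y' then 1 else 0) * if f u x = a then (1:ℕ) else 0 := by
      rw [Finset.sum_eq_single (f u x)]
      · simp [hfx]
      · intro b _ hb; simp [Ne.symm hb]
      · simp
    calc (0:ℕ) < (∑ a, (if h a = y' then 1 else 0) * if f u x = a then 1 else 0) *
          if h x = y then 1 else 0 := by simpa [hx] using this
      _ ≤ _ := Finset.single_le_sum (f := fun x =>
          (∑ a, (if h a = y' then 1 else 0) * if f u x = a then (1:ℕ) else 0) *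
            if h x = y then 1 else 0) (fun i _ => Nat.zero_le _) (Finset.mem_univ x)
end
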